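/- arXiv:1305.1071 — 2 statements merged into one kernel-verified Lean document; each statement's English description precedes it below -/
import Mathlib

section
/- Let G be a group with subgroups A and B such that A has finite index in G and B is a retract of G via a retraction p: G → B. Suppose every homomorphism from G to a finite group factors through a torsion-free elementary amenable group. Then every homomorphism from A ∩ B to a finite group factors through a torsion-free elementary amenable group. -/
universe u

/-- The class of elementary amenable groups: the smallest class of groups containing
all finite groups and all abelian groups, closed under subgroups, quotients,
extensions, and directed unions (and isomorphism). -/
inductive ElementaryAmenable : ∀ (G : Type u) [Group G], Prop
  | of_finite (G : Type u) [Group G] (h : Finite G) : ElementaryAmenable G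
  | of_abelian (G : Type u) [Group G] (h : ∀ a b : G, a * b = b * a) : ElementaryAmenable G
  | of_subgroup (G : Type u) [Group G] (H : Subgroup G) (h : ElementaryAmenable G) :
      ElementaryAmenable H
  | of_quotient (G : Type u) [Group G] (N : Subgroup G) [N.Normal] (h : ElementaryAmenable G) :
      ElementaryAmenable (G ⧸ N)
  | of_extension (G : Type u) [Group G] (N : Subgroup G) [N.Normal]
      (hN : ElementaryAmenable N) (hQ : ElementaryAmenable (G ⧸ N)) : ElementaryAmenable G
  | of_directedUnion (G : Type u) [Group G] (ι : Type u) (K : ι → Subgroup G)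
      (hdir : Directed (· ≤ ·) K) (hsup : (⨆ i, K i) = ⊤)
      (h : ∀ i, ElementaryAmenable (K i)) : ElementaryAmenable G
  | of_mulEquiv (G H : Type u) [Group G] [Group H] (e : G ≃* H) (h : ElementaryAmenable G) :
      ElementaryAmenable H

/-- A group `H` has the factorization property if every homomorphism from `H` to a
finite group factors through a torsion-free elementary amenable group. -/
def HasFactorizationProperty (H : Type u) [Group H] : Prop :=
  ∀ (P : GrpCat.{u}), Finite P → ∀ f : H →* P,
    ∃ (M : GrpCat.{u}) (g : H →* M) (h : (M : Type u) →* P),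
      (∀ g : (M : Type u), g ≠ 1 → ¬IsOfFinOrder g) ∧ ElementaryAmenable M ∧ h.comp g = f

/-- The factorization property transfers along group isomorphisms. -/
theorem HasFactorizationProperty.of_mulEquiv' {H K : Type u} [Group H] [Group K]
    (e : H ≃* K) (hH : HasFactorizationProperty H) : HasFactorizationProperty K := by
  intro P hP f
  obtain ⟨M, g, h, h1, h2, h3⟩ := hH P hP (f.comp e.toMonoidHom)
  refine ⟨M, g.comp e.symm.toMonoidHom, h, h1, h2, ?_⟩
  ext x
  have := DFunLike.congr_fun h3 (e.symm x)
  simpa using this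

/-- The factorization property passes to finite index subgroups. -/
theorem HasFactorizationProperty.of_finiteIndex {K : Type u} [Group K] (H : Subgroup K)
    [H.FiniteIndex] (hK : HasFactorizationProperty K) :
    HasFactorizationProperty H := by
  intro P hP f
  haveI : Finite f.range := Subtype.finite
  haveI hker : f.ker.FiniteIndex := Subgroup.finiteIndex_ker f
  set Kf : Subgroup K := f.ker.map H.subtype with hKfdef
  haveI hKfFI : Kf.FiniteIndex := by
    constructor
    have h1 : Kf ≤ H := Subgroup.map_subtype_le _
    have h2 : Kf.relIndex H * H.index = Kf.index := Subgroup.relIndex_mul_index h1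
    have h3 : Kf.relIndex H = f.ker.index := by
      rw [Subgroup.relIndex, hKfdef, Subgroup.subgroupOf,
        Subgroup.comap_map_eq_self_of_injective H.subtype_injective]
    rw [← h2, h3]
    exact mul_ne_zero hker.index_ne_zero Subgroup.FiniteIndex.index_ne_zero
  set N : Subgroup K := Kf.normalCore with hNdef
  haveI : N.Normal := Subgroup.normalCore_normal Kf
  haveI : N.FiniteIndex := Subgroup.finiteIndex_normalCore Kf
  haveI : Finite (K ⧸ N) := Subgroup.finite_quotient_of_finiteIndex (H := N)
  set φ : K →* K ⧸ N := QuotientGroup.mk' N with hφdef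
  obtain ⟨M, g, h, hM1, hM2, hM3⟩ := hK (GrpCat.of (K ⧸ N)) ‹Finite (K ⧸ N)› φ
  set φH : (H : Type u) →* K ⧸ N := φ.comp H.subtype with hφHdef
  -- the kernel of `φH` is contained in the kernel of `f`
  have hkerle : φH.ker ≤ f.ker := by
    intro x hx
    have hxN : (x : K) ∈ N := (QuotientGroup.eq_one_iff _).mp hx
    have hxKf : (x : K) ∈ Kf := Subgroup.normalCore_le Kf hxN
    obtain ⟨y, hy, hyx⟩ := hxKf
    have : y = x := Subtype.ext hyx
    rwa [← this]
  set fbar : (H ⧸ φH.ker) →* P :=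
    QuotientGroup.lift φH.ker f (fun x hx => hkerle hx) with hfbardef
  set ι : (H ⧸ φH.ker) →* K ⧸ N := QuotientGroup.kerLift φH with hιdef
  have hιinj : Function.Injective ι := QuotientGroup.kerLift_injective φH
  set e : (H ⧸ φH.ker) ≃* ι.range := MonoidHom.ofInjective hιinj with hedef
  set M' : Subgroup M := ι.range.comap h with hM'def
  have hhg : ∀ x : (H : Type u), h (g (x : K)) = φ (x : K) := fun x =>
    DFunLike.congr_fun hM3 (x : K)
  have hmem : ∀ x : (H : Type u), g (x : K) ∈ M' := by
    intro x
    have : h (g (x : K)) = ι (QuotientGroup.mk x) := by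
      rw [hhg x]; rfl
    exact ⟨QuotientGroup.mk x, this.symm⟩
  set g' : (H : Type u) →* M' := (g.comp H.subtype).codRestrict M' hmem with hg'def
  set h' : (M' : Type u) →* P :=
    fbar.comp (e.symm.toMonoidHom.comp (h.subgroupComap ι.range)) with hh'def
  refine ⟨GrpCat.of M', g', h', fun x hx hfo => hM1 x.1 (fun h => hx (Subtype.ext h)) (MonoidHom.isOfFinOrder M'.subtype hfo), ElementaryAmenable.of_subgroup _ M' hM2, ?_⟩
  ext x
  show fbar (e.symm ((h.subgroupComap ι.range) (g' x))) = f x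
  have hval : ((h.subgroupComap ι.range) (g' x)).val = ι (QuotientGroup.mk x) := by
    show h (g (x : K)) = ι (QuotientGroup.mk x)
    rw [hhg x]; rfl
  have he : e.symm ((h.subgroupComap ι.range) (g' x)) = QuotientGroup.mk x := by
    rw [MulEquiv.symm_apply_eq]
    apply Subtype.ext
    show _ = (e (QuotientGroup.mk x)).val
    rw [hval]
    simp [hedef, MonoidHom.ofInjective_apply]
  rw [he]
  rfl

/-- If `A` is a finite index subgroup of `G`, `B` is a retract of `G`, and `G` has the
factorization property, then `A ⊓ B` has the factorization property. -/
theorem inf_finiteIndex_retract_hasFactorizationProperty (G : Type u) [Group G]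
    (A B : Subgroup G) [A.FiniteIndex]
    (p : G →* B) (hp : p.comp B.subtype = MonoidHom.id B)
    (hG : HasFactorizationProperty G) :
    HasFactorizationProperty ((A ⊓ B : Subgroup G) : Type u) := by
  -- `B` has the factorization property as a retract of `G`
  have hB : HasFactorizationProperty (B : Type u) := by
    intro P hP f
    obtain ⟨M, g, h, h1, h2, h3⟩ := hG P hP (f.comp p)
    refine ⟨M, g.comp B.subtype, h, h1, h2, ?_⟩
    rw [← MonoidHom.comp_assoc, h3, MonoidHom.comp_assoc, hp, MonoidHom.comp_id]
  -- `A ⊓ B` viewed inside `B` has finite index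
  haveI : ((A ⊓ B).subgroupOf B).FiniteIndex := by
    rw [Subgroup.inf_subgroupOf_right]
    infer_instance
  have h1 := HasFactorizationProperty.of_finiteIndex ((A ⊓ B).subgroupOf B) hB
  exact HasFactorizationProperty.of_mulEquiv' (Subgroup.subgroupOfEquivOfLe inf_le_right) h1
end

section
/- If groups G₁ and G₂ both have the factorization property, then the direct product G₁ × G₂ has the factorization property. -/
universe u

lemma isTorsionFree_subgroup {M : Type*} [Group M] (h : ∀ g : M, g ≠ 1 → ¬IsOfFinOrder g)
    (S : Subgroup M) : ∀ g : S, g ≠ 1 → ¬IsOfFinOrder g := by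
  intro g hg hfin
  exact h (g : M) (by simpa using hg) (S.subtype.isOfFinOrder hfin)

lemma isTorsionFree_prod {A B : Type*} [Group A] [Group B]
    (hA : ∀ g : A, g ≠ 1 → ¬IsOfFinOrder g) (hB : ∀ g : B, g ≠ 1 → ¬IsOfFinOrder g) :
    ∀ g : A × B, g ≠ 1 → ¬IsOfFinOrder g := by
  rintro ⟨a, b⟩ hne hfin
  have ha := (MonoidHom.fst A B).isOfFinOrder hfin
  have hb := (MonoidHom.snd A B).isOfFinOrder hfin
  have h1 : a = 1 := by
    by_contra h; exact hA a h ha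
  have h2 : b = 1 := by
    by_contra h; exact hB b h hb
  exact hne (by simp [h1, h2, Prod.ext_iff])

lemma elementaryAmenable_prod {A B : Type u} [Group A] [Group B]
    (hA : ElementaryAmenable A) (hB : ElementaryAmenable B) :
    ElementaryAmenable (A × B) := by
  refine ElementaryAmenable.of_extension _ (MonoidHom.snd A B).ker ?_ ?_
  · refine ElementaryAmenable.of_mulEquiv A _ ?_ hA
    refine
      { toFun := fun a => ⟨(a, 1), MonoidHom.mem_ker.mpr rfl⟩
        invFun := fun x => x.1.1
        left_inv := fun a => rfl
        right_inv := ?_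
        map_mul' := fun a b => by ext <;> simp }
    rintro ⟨⟨a, b⟩, hx⟩
    have : b = 1 := MonoidHom.mem_ker.mp hx
    simp [this]
  · refine ElementaryAmenable.of_mulEquiv B _ ?_ hB
    exact (QuotientGroup.quotientKerEquivOfSurjective (MonoidHom.snd A B)
      (fun b => ⟨(1, b), rfl⟩)).symm

/-- The factorization property is preserved by direct products. -/
theorem prod_hasFactorizationProperty (G₁ G₂ : Type u) [Group G₁] [Group G₂]
    (h1 : HasFactorizationProperty G₁) (h2 : HasFactorizationProperty G₂) :
    HasFactorizationProperty (G₁ × G₂) := by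
  intro P hP f
  obtain ⟨M₁, g₁, k₁, tf₁, ea₁, hc₁⟩ := h1 P hP (f.comp (MonoidHom.inl G₁ G₂))
  obtain ⟨M₂, g₂, k₂, tf₂, ea₂, hc₂⟩ := h2 P hP (f.comp (MonoidHom.inr G₁ G₂))
  set N₁ := g₁.range
  set N₂ := g₂.range
  have comm : ∀ (m : N₁) (n : N₂),
      Commute ((k₁.comp N₁.subtype) m) ((k₂.comp N₂.subtype) n) := by
    rintro ⟨m, a, rfl⟩ ⟨n, b, rfl⟩
    have ha : k₁ (g₁ a) = f (a, 1) := DFunLike.congr_fun hc₁ a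
    have hb : k₂ (g₂ b) = f (1, b) := DFunLike.congr_fun hc₂ b
    simp only [MonoidHom.comp_apply, Subgroup.coe_subtype, ha, hb]
    rw [Commute, SemiconjBy, ← map_mul, ← map_mul, Prod.mk_mul_mk]
    simp
  refine ⟨GrpCat.of (N₁ × N₂),
    (g₁.rangeRestrict.comp (MonoidHom.fst G₁ G₂)).prod
      (g₂.rangeRestrict.comp (MonoidHom.snd G₁ G₂)),
    MonoidHom.noncommCoprod (k₁.comp N₁.subtype) (k₂.comp N₂.subtype) comm,
    isTorsionFree_prod (isTorsionFree_subgroup tf₁ _) (isTorsionFree_subgroup tf₂ _),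
    elementaryAmenable_prod (ElementaryAmenable.of_subgroup M₁ _ ea₁)
      (ElementaryAmenable.of_subgroup M₂ _ ea₂), ?_⟩
  refine MonoidHom.ext fun x => ?_
  obtain ⟨a, b⟩ := x
  have ha : k₁ (g₁ a) = f (a, 1) := DFunLike.congr_fun hc₁ a
  have hb : k₂ (g₂ b) = f (1, b) := DFunLike.congr_fun hc₂ b
  show k₁ (g₁ a) * k₂ (g₂ b) = f (a, b)
  rw [ha, hb, ← map_mul, Prod.mk_mul_mk, mul_one, one_mul]
end
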